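/- For every real x ≥ 0 and all r_a, r_b ∈ [0,1], the following inequality holds: (2 − r_b/5)·x² + 2x·(√((1+r_a)(1+r_b)) − 3) − r_a/5 + 2 ≥ 0. -/
import Mathlib


/-- the scalar compatibility inequality for the pair `(φ_4, γ_8)`:
for `x ≥ 0` and `r_a, r_b ∈ [0,1]`,
`(2 - r_b/5)x² + 2x(√((1+r_a)(1+r_b)) - 3) - r_a/5 + 2 ≥ 0`. -/
theorem scalar_compat_phi4_gamma8 (x ra rb : ℝ)
    (hx : 0 ≤ x) (hra0 : 0 ≤ ra) (hra1 : ra ≤ 1) (hrb0 : 0 ≤ rb) (hrb1 : rb ≤ 1) :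
    0 ≤ (2 - rb / 5) * x ^ 2
        + 2 * x * (Real.sqrt ((1 + ra) * (1 + rb)) - 3)
        - ra / 5 + 2 := by
  set s := Real.sqrt ((1 + ra) * (1 + rb)) with hs
  have hprod : (0:ℝ) ≤ (1 + ra) * (1 + rb) := by nlinarith
  have hs0 : 0 ≤ s := Real.sqrt_nonneg _
  have hs2 : s ^ 2 = (1 + ra) * (1 + rb) := Real.sq_sqrt hprod
  have hlb : 1 + (ra + rb + ra * rb) / 3 ≤ s := by
    rw [hs, show (1 + ra) * (1 + rb) = 1 + (ra + rb + ra * rb) by ring]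
    rw [Real.le_sqrt (by nlinarith [mul_nonneg hra0 hrb0])]
    nlinarith [mul_nonneg (by nlinarith : (0:ℝ) ≤ ra + rb + ra * rb)
      (by nlinarith : (0:ℝ) ≤ 3 - (ra + rb + ra * rb))]
    nlinarith [mul_nonneg hra0 hrb0]
  have hdisc : (2 * (s - 3)) ^ 2 ≤ 4 * (2 - rb / 5) * (2 - ra / 5) := by
    nlinarith [hs2, hlb, mul_nonneg hra0 hrb0]
  nlinarith [sq_nonneg ((2 - rb / 5) * x + (s - 3)), hdisc, hx, sq_nonneg x,
    mul_nonneg hx hx]
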